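/- Let p, q ∈ K^N where K = F_{2^r}, and let φ : K → F_2 be an F_2-linear map. Then the matrix obtained by applying φ entrywise to the rank-one matrix p qᵀ has rank at most r over F_2. -/

import Mathlib

/-- applying an F₂-linear map φ : F_{2^r} → F₂ entrywise to a
rank-one matrix p qᵀ over K = F_{2^r} gives a matrix of rank ≤ r over F₂. -/
theorem stmt8 (N r : ℕ) (hr : 0 < r) (p q : Fin N → GaloisField 2 r)
    (φ : GaloisField 2 r →ₗ[ZMod 2] ZMod 2) :
    ((Matrix.vecMulVec p q).map φ).rank ≤ r := by
  have b : Module.Basis (Fin r) (ZMod 2) (GaloisField 2 r) :=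
    Module.finBasisOfFinrankEq (ZMod 2) (GaloisField 2 r) (GaloisField.finrank 2 hr.ne')
  set A : Matrix (Fin N) (Fin r) (ZMod 2) := fun i k => b.repr (p i) k with hA
  set B : Matrix (Fin r) (Fin N) (ZMod 2) := fun k j => φ (b k * q j) with hB
  have hM : (Matrix.vecMulVec p q).map φ = A * B := by
    ext i j
    simp only [Matrix.map_apply, Matrix.vecMulVec_apply, Matrix.mul_apply, hA, hB]
    calc φ (p i * q j) = φ ((∑ k, b.repr (p i) k • b k) * q j) := by rw [Module.Basis.sum_repr]
    _ = ∑ k, b.repr (p i) k * φ (b k * q j) := by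
        rw [Finset.sum_mul, map_sum]
        simp [smul_mul_assoc]
  rw [hM]
  calc (A * B).rank ≤ B.rank := Matrix.rank_mul_le_right A B
  _ ≤ Fintype.card (Fin r) := B.rank_le_card_height
  _ = r := Fintype.card_fin r
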